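/- Let X be a finite set with |X| = m ≥ 3, let k ≥ 2, and fix a ∈ X. Let X₂ = {f ∈ 𝔶_k(X) : a ∈ supp(f)}, X₁ = 𝔶_k(X∖{a}), L₂ = {e ∈ 𝔶_{<k}(X) : a ∈ supp(e)}, and L₁ = 𝔶_{<k}(X∖{a}). Then the dual Veronesian V(X,k)° equals ⟨L₂, X₂, I⁻¹⟩ ⋊_∞ ⟨L₁, X₁, I⁻¹⟩, where for each f ∈ X₂ (a line of ⟨L₂, X₂, I⁻¹⟩) one sets ∞(f) = f / a^{dg(a,f)} ∈ L₁, with dg(a,f) the multiplicity of a in f; moreover ⟨L₂, X₂, I⁻¹⟩ is isomorphic to V(X, k−1)° and ⟨L₁, X₁, I⁻¹⟩ is isomorphic to V(X∖{a}, k)°, so V(X,k)° ≅ V(X,k−1)° ⋊_∞ V(X∖{a},k)°. -/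
import Mathlib


/-- An incidence structure: a set of points, a set of lines (inside ambient types
`P` and `L`), and an incidence relation. -/
structure IncStr (P : Type*) (L : Type*) where
  pts : Set P
  lns : Set L
  inc : P → L → Prop

namespace IncStr

variable {P L P' L' : Type*}

/-- Incidence only relates points of the structure with lines of the structure. -/
def Proper (K : IncStr P L) : Prop :=
  ∀ p l, K.inc p l → p ∈ K.pts ∧ l ∈ K.lns

/-- A partial linear space: two distinct points incident with two lines force the
lines to coincide. -/
def IsPLS (K : IncStr P L) : Prop :=
  K.Proper ∧
    ∀ a b A B, a ≠ b → K.inc a A → K.inc b A → K.inc a B → K.inc b B → A = B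

/-- A subspace: whenever two distinct points of `H` are incident with a line, every
point incident with that line belongs to `H`. -/
def IsSubspace (K : IncStr P L) (H : Set P) : Prop :=
  H ⊆ K.pts ∧
    ∀ a b A, a ∈ H → b ∈ H → a ≠ b → K.inc a A → K.inc b A →
      ∀ x, K.inc x A → x ∈ H

/-- A hyperplane: a proper subspace met by every line. -/
def IsHyperplane (K : IncStr P L) (H : Set P) : Prop :=
  K.IsSubspace H ∧ H ≠ K.pts ∧ ∀ A ∈ K.lns, ∃ x ∈ H, K.inc x A

/-- `L[H]`: the lines all of whose incident points lie in `H`. -/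
def linesIn (K : IncStr P L) (H : Set P) : Set L :=
  {A ∈ K.lns | ∀ x, K.inc x A → x ∈ H}

/-- The restriction `K↾H`. -/
def restrict (K : IncStr P L) (H : Set P) : IncStr P L where
  pts := H
  lns := K.linesIn H
  inc := fun p l => K.inc p l ∧ p ∈ H ∧ l ∈ K.linesIn H

/-- The reduct `K∖H`. -/
def reduct (K : IncStr P L) (H : Set P) : IncStr P L where
  pts := K.pts \ H
  lns := K.lns \ K.linesIn H
  inc := fun p l => K.inc p l ∧ p ∈ K.pts \ H ∧ l ∈ K.lns \ K.linesIn H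

/-- The dual structure `K°`. -/
def dual (K : IncStr P L) : IncStr L P where
  pts := K.lns
  lns := K.pts
  inc := fun l p => K.inc p l

/-- The join `K₁ ⋊_∞ K₂` determined by a map `f = ∞` from (the ambient type of)
lines of `K₁` to points of `K₂`. -/
def join (K₁ K₂ : IncStr P L) (f : L → P) : IncStr P L where
  pts := K₁.pts ∪ K₂.pts
  lns := K₁.lns ∪ K₂.lns
  inc := fun p l => K₁.inc p l ∨ K₂.inc p l ∨ (l ∈ K₁.lns ∧ p = f l)

/-- Condition (∗): a point of `K₁` incident with two lines of `K₁` having the same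
image under `∞` forces the lines to coincide. -/
def StarCond (K₁ : IncStr P L) (f : L → P) : Prop :=
  ∀ x A B, K₁.inc x A → K₁.inc x B → f A = f B → A = B

/-- The rank of a point: the number of lines incident with it. -/
noncomputable def pointRank (K : IncStr P L) (p : P) : ℕ :=
  {l | K.inc p l}.ncard

/-- The size of a line: the number of points incident with it. -/
noncomputable def lineSize (K : IncStr P L) (l : L) : ℕ :=
  {p | K.inc p l}.ncard

/-- A finite `(ν_ρ, β_κ)`-configuration. -/
def IsConfig (K : IncStr P L) (ν ρ β κ : ℕ) : Prop :=
  K.pts.Finite ∧ K.lns.Finite ∧ K.IsPLS ∧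
  K.pts.ncard = ν ∧ K.lns.ncard = β ∧
  (∀ p ∈ K.pts, K.pointRank p = ρ) ∧
  (∀ l ∈ K.lns, K.lineSize l = κ)

/-- A binomial configuration of type `B(k,m)`. -/
def IsBinomial (K : IncStr P L) (k m : ℕ) : Prop :=
  K.IsConfig ((m + k - 1).choose k) k ((m + k - 1).choose m) m

/-- `(fp, fl)` is an isomorphism of incidence structures: a pair of bijections
(on points and on lines) preserving and reflecting incidence. -/
def IsIso (K : IncStr P L) (K' : IncStr P' L') (fp : P → P') (fl : L → L') : Prop :=
  Set.BijOn fp K.pts K'.pts ∧ Set.BijOn fl K.lns K'.lns ∧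
    ∀ p ∈ K.pts, ∀ l ∈ K.lns, (K.inc p l ↔ K'.inc (fp p) (fl l))

def Isomorphic (K : IncStr P L) (K' : IncStr P' L') : Prop :=
  ∃ fp fl, IsIso K K' fp fl

/-- A formally disjoint (tagged) copy of an incidence structure. -/
def tag (K : IncStr P L) (b : Bool) : IncStr (P × Bool) (L × Bool) where
  pts := (fun p => (p, b)) '' K.pts
  lns := (fun l => (l, b)) '' K.lns
  inc := fun p l => K.inc p.1 l.1 ∧ p.2 = b ∧ l.2 = b

end IncStr

/-- The combinatorial Grassmannian `G(Y,k) = ⟨℘_k(Y), ℘_{k+1}(Y), ⊂⟩`. -/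
def Gras {α : Type*} (Y : Finset α) (k : ℕ) : IncStr (Finset α) (Finset α) where
  pts := {a : Finset α | a ⊆ Y ∧ a.card = k}
  lns := {A : Finset α | A ⊆ Y ∧ A.card = k + 1}
  inc := fun a A => a ⊆ Y ∧ a.card = k ∧ A ⊆ Y ∧ A.card = k + 1 ∧ a ⊂ A

/-- The combinatorial Veronesian `V(Y,k)`: points are multisets of size `k` with
elements in `Y`, lines are multisets of size `< k` with elements in `Y`, a point `f`
is incident with a line `e` iff `f = e·x^{k-|e|}` for some `x ∈ Y`. -/
def Ver {α : Type*} (Y : Finset α) (k : ℕ) : IncStr (Multiset α) (Multiset α) where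
  pts := {f : Multiset α | (∀ x ∈ f, x ∈ Y) ∧ Multiset.card f = k}
  lns := {e : Multiset α | (∀ x ∈ e, x ∈ Y) ∧ Multiset.card e < k}
  inc := fun f e =>
    (∀ x ∈ f, x ∈ Y) ∧ Multiset.card f = k ∧
    (∀ x ∈ e, x ∈ Y) ∧ Multiset.card e < k ∧
    ∃ x ∈ Y, f = e + Multiset.replicate (k - Multiset.card e) x

/-- The structure `⟨L₂, X₂, I⁻¹⟩`: points are the lines of `V(X,k)` containing `a`,
lines are the points of `V(X,k)` containing `a`, with the (restricted) inverse
incidence of `V(X,k)`. -/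
def dualVerPart2 (α : Type*) [Fintype α] [DecidableEq α] (k : ℕ) (a : α) :
    IncStr (Multiset α) (Multiset α) where
  pts := {e : Multiset α | Multiset.card e < k ∧ a ∈ e}
  lns := {f : Multiset α | Multiset.card f = k ∧ a ∈ f}
  inc := fun e f => (Ver (Finset.univ : Finset α) k).inc f e ∧
    (Multiset.card e < k ∧ a ∈ e) ∧ (Multiset.card f = k ∧ a ∈ f)

/-- The structure `⟨L₁, X₁, I⁻¹⟩`: points are the lines of `V(X,k)` avoiding `a`,
lines are the points of `V(X,k)` avoiding `a`, with the (restricted) inverse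
incidence of `V(X,k)`. -/
def dualVerPart1 (α : Type*) [Fintype α] [DecidableEq α] (k : ℕ) (a : α) :
    IncStr (Multiset α) (Multiset α) where
  pts := {e : Multiset α | Multiset.card e < k ∧ a ∉ e}
  lns := {f : Multiset α | Multiset.card f = k ∧ a ∉ f}
  inc := fun e f => (Ver (Finset.univ : Finset α) k).inc f e ∧
    (Multiset.card e < k ∧ a ∉ e) ∧ (Multiset.card f = k ∧ a ∉ f)


section Stmt17Aux

open Multiset

variable {α : Type*} [DecidableEq α]

set_option linter.unusedSectionVars false

private lemma IncStr_ext {P L : Type*} {K K' : IncStr P L} (h1 : K.pts = K'.pts)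
    (h2 : K.lns = K'.lns) (h3 : K.inc = K'.inc) : K = K' := by
  cases K; cases K'; cases h1; cases h2; cases h3; rfl

private lemma verinc_univ [Fintype α] (k : ℕ) (f e : Multiset α) :
    (Ver (Finset.univ : Finset α) k).inc f e ↔
      Multiset.card f = k ∧ Multiset.card e < k ∧
      ∃ x, f = e + Multiset.replicate (k - Multiset.card e) x := by
  simp [Ver]

private lemma verinc_erase [Fintype α] (k : ℕ) (a : α) (f e : Multiset α) :
    (Ver (Finset.univ.erase a) k).inc f e ↔
      a ∉ f ∧ Multiset.card f = k ∧ a ∉ e ∧ Multiset.card e < k ∧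
      ∃ x ≠ a, f = e + Multiset.replicate (k - Multiset.card e) x := by
  simp only [Ver, Finset.mem_erase, Finset.mem_univ, and_true]
  constructor
  · rintro ⟨h1, h2, h3, h4, x, hx1, hx2⟩
    exact ⟨fun h => h1 a h rfl, h2, fun h => h3 a h rfl, h4, x, hx1, hx2⟩
  · rintro ⟨h1, h2, h3, h4, x, hx1, hx2⟩
    exact ⟨fun y hy hya => h1 (hya ▸ hy), h2, fun y hy hya => h3 (hya ▸ hy), h4, x, hx1, hx2⟩

private lemma filter_ne_rep (e : Multiset α) (a : α) (s : ℕ) (he : a ∉ e) :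
    Multiset.filter (· ≠ a) (e + Multiset.replicate s a) = e := by
  have he' : Multiset.filter (· ≠ a) e = e :=
    Multiset.filter_eq_self.2 (fun x hx h => he (h ▸ hx))
  have hr : Multiset.filter (· ≠ a) (Multiset.replicate s a) = 0 :=
    Multiset.filter_eq_nil.2 (fun x hx h => h (Multiset.eq_of_mem_replicate hx))
  rw [Multiset.filter_add, he', hr, add_zero]

private lemma decompose (a : α) (f : Multiset α) (ha : a ∈ f) :
    f = Multiset.filter (· ≠ a) f
      + Multiset.replicate (Multiset.card f - Multiset.card (Multiset.filter (· ≠ a) f)) a ∧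
    Multiset.card (Multiset.filter (· ≠ a) f) < Multiset.card f ∧
    a ∉ Multiset.filter (· ≠ a) f := by
  have h1 : Multiset.filter (fun x => ¬ x ≠ a) f = Multiset.replicate (Multiset.count a f) a :=
    (Multiset.filter_congr (fun x _ => by simp)).trans (Multiset.filter_eq' f a)
  have h2 := Multiset.filter_add_not (· ≠ a) f
  rw [h1] at h2
  have hc : Multiset.card (Multiset.filter (· ≠ a) f) + Multiset.count a f
      = Multiset.card f := by
    conv_rhs => rw [← h2]
    simp
  have hpos : 0 < Multiset.count a f := Multiset.count_pos.2 ha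
  refine ⟨?_, by omega, by simp⟩
  rw [show Multiset.card f - Multiset.card (Multiset.filter (· ≠ a) f)
      = Multiset.count a f by omega]
  exact h2.symm

private lemma filter_erase_eq (a : α) (f : Multiset α) (haf : a ∈ f) :
    Multiset.filter (· ≠ a) (f.erase a) = Multiset.filter (· ≠ a) f := by
  conv_rhs => rw [← Multiset.cons_erase haf]
  rw [Multiset.filter_cons_of_neg]
  simp

private lemma card_erase_lt (a : α) (e : Multiset α) (k : ℕ) (hae : a ∈ e)
    (he : Multiset.card e < k) (hk : 2 ≤ k) :
    Multiset.card (e.erase a) < k - 1 := by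
  have h1 : Multiset.card (e.erase a) = Multiset.card e - 1 :=
    Multiset.card_erase_of_mem hae
  have h2 : 0 < Multiset.card e := Multiset.card_pos_iff_exists_mem.2 ⟨a, hae⟩
  omega

private lemma card_erase_eq (a : α) (f : Multiset α) (k : ℕ) (haf : a ∈ f)
    (hf : Multiset.card f = k) (hk : 2 ≤ k) :
    Multiset.card (f.erase a) = k - 1 := by
  have h1 : Multiset.card (f.erase a) = Multiset.card f - 1 :=
    Multiset.card_erase_of_mem haf
  have h2 : 0 < Multiset.card f := Multiset.card_pos_iff_exists_mem.2 ⟨a, haf⟩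
  omega

/-- The `∃`-clause of incidence transfers along erasing one copy of `a`. -/
private lemma exists_erase_equiv (k : ℕ) (a : α) (e f : Multiset α)
    (hae : a ∈ e) (haf : a ∈ f) (he : Multiset.card e < k) (hf : Multiset.card f = k) :
    (∃ x, f = e + Multiset.replicate (k - Multiset.card e) x) ↔
      ∃ x, f.erase a = e.erase a
        + Multiset.replicate ((k - 1) - Multiset.card (e.erase a)) x := by
  have hce : 1 ≤ Multiset.card e := by
    have := Multiset.count_pos.2 hae
    have := Multiset.count_le_card a e
    omega
  have hcee : Multiset.card (e.erase a) = Multiset.card e - 1 :=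
    Multiset.card_erase_of_mem hae
  have harith : (k - 1) - Multiset.card (e.erase a) = k - Multiset.card e := by omega
  rw [harith]
  constructor
  · rintro ⟨x, hx⟩
    exact ⟨x, by rw [hx, Multiset.erase_add_left_pos _ hae]⟩
  · rintro ⟨x, hx⟩
    refine ⟨x, ?_⟩
    rw [← Multiset.cons_erase haf, hx, ← Multiset.cons_add, Multiset.cons_erase hae]

/-- The `∃`-clause of incidence can avoid `a` when `a ∉ f`. -/
private lemma exists_ne_equiv (k : ℕ) (a : α) (e f : Multiset α)
    (he : Multiset.card e < k) (haf : a ∉ f) :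
    (∃ x, f = e + Multiset.replicate (k - Multiset.card e) x) ↔
      ∃ x ≠ a, f = e + Multiset.replicate (k - Multiset.card e) x := by
  constructor
  · rintro ⟨x, hx⟩
    refine ⟨x, fun hxa => haf ?_, hx⟩
    subst hxa
    rw [hx]
    exact Multiset.mem_add.2 (Or.inr (Multiset.mem_replicate.2 ⟨by omega, rfl⟩))
  · rintro ⟨x, -, hx⟩
    exact ⟨x, hx⟩

/-- The central incidence decomposition. -/
private lemma main_iff [Fintype α] (k : ℕ) (a : α) (e f : Multiset α) :
    (Ver (Finset.univ : Finset α) k).inc f e ↔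
      ((dualVerPart2 α k a).inc e f ∨ (dualVerPart1 α k a).inc e f ∨
        (f ∈ (dualVerPart2 α k a).lns ∧ e = Multiset.filter (· ≠ a) f)) := by
  constructor
  · intro h
    obtain ⟨hf, he, x, hx⟩ := (verinc_univ k f e).1 h
    by_cases hae : a ∈ e
    · have haf : a ∈ f := by
        rw [hx]; exact Multiset.mem_add.2 (Or.inl hae)
      exact Or.inl ⟨h, ⟨he, hae⟩, hf, haf⟩
    · by_cases haf : a ∈ f
      · refine Or.inr (Or.inr ⟨⟨hf, haf⟩, ?_⟩)
        have hxa : x = a := by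
          rw [hx] at haf
          rcases Multiset.mem_add.1 haf with h' | h'
          · exact absurd h' hae
          · exact ((Multiset.eq_of_mem_replicate h')).symm
        subst hxa
        rw [hx, filter_ne_rep e x _ hae]
      · exact Or.inr (Or.inl ⟨h, ⟨he, hae⟩, hf, haf⟩)
  · rintro (⟨h, -⟩ | ⟨h, -⟩ | ⟨⟨hf, haf⟩, he⟩)
    · exact h
    · exact h
    · subst he
      obtain ⟨hdec, hlt, -⟩ := decompose a f haf
      rw [verinc_univ]
      rw [hf] at hdec hlt
      exact ⟨hf, hlt, a, hdec⟩

end Stmt17Aux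

/-- for `|X| = m ≥ 3`, `k ≥ 2` and `a ∈ X`, the dual Veronesian
`V(X,k)°` equals `⟨L₂, X₂, I⁻¹⟩ ⋊_∞ ⟨L₁, X₁, I⁻¹⟩`, where `∞(f) = f / a^{dg(a,f)}`
removes all copies of `a` from `f`; moreover `⟨L₂, X₂, I⁻¹⟩ ≅ V(X, k-1)°` and
`⟨L₁, X₁, I⁻¹⟩ ≅ V(X∖{a}, k)°`, so `V(X,k)° ≅ V(X,k-1)° ⋊ V(X∖{a},k)°`
(with formally disjoint tagged copies in the last join). -/
theorem statement17 {α : Type*} [Fintype α] [DecidableEq α] (m k : ℕ)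
    (hm : 3 ≤ m) (hk : 2 ≤ k) (hcard : Fintype.card α = m) (a : α) :
    (Ver (Finset.univ : Finset α) k).dual =
      IncStr.join (dualVerPart2 α k a) (dualVerPart1 α k a)
        (fun f => Multiset.filter (· ≠ a) f) ∧
    IncStr.Isomorphic (dualVerPart2 α k a)
      (Ver (Finset.univ : Finset α) (k - 1)).dual ∧
    IncStr.Isomorphic (dualVerPart1 α k a)
      (Ver (Finset.univ.erase a) k).dual ∧
    IncStr.Isomorphic (Ver (Finset.univ : Finset α) k).dual
      (IncStr.join
        (IncStr.tag (Ver (Finset.univ : Finset α) (k - 1)).dual false)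
        (IncStr.tag (Ver (Finset.univ.erase a) k).dual true)
        (fun h => (Multiset.filter (· ≠ a) h.1, true))) := by
  have heq : (Ver (Finset.univ : Finset α) k).dual =
      IncStr.join (dualVerPart2 α k a) (dualVerPart1 α k a)
        (fun f => Multiset.filter (· ≠ a) f) := by
    refine IncStr_ext ?_ ?_ ?_
    · ext e
      simp only [IncStr.dual, IncStr.join, Ver, dualVerPart2, dualVerPart1,
        Set.mem_setOf_eq, Set.mem_union, Finset.mem_univ, implies_true, true_and]
      tauto
    · ext f
      simp only [IncStr.dual, IncStr.join, Ver, dualVerPart2, dualVerPart1,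
        Set.mem_setOf_eq, Set.mem_union, Finset.mem_univ, implies_true, true_and]
      tauto
    · funext e f
      exact propext (main_iff k a e f)
  have card_pos_of_mem : ∀ (x : α) (s : Multiset α), x ∈ s → 1 ≤ Multiset.card s := by
    intro x s hx
    have h1 := Multiset.count_pos.2 hx
    have h2 := Multiset.count_le_card x s
    omega
  have iso2 : IncStr.Isomorphic (dualVerPart2 α k a)
      (Ver (Finset.univ : Finset α) (k - 1)).dual := by
    refine ⟨fun e => e.erase a, fun f => f.erase a, ⟨?_, ?_, ?_⟩, ⟨?_, ?_, ?_⟩, ?_⟩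
    · rintro e ⟨he, hae⟩
      exact ⟨fun x _ => Finset.mem_univ x, card_erase_lt a e k hae he hk⟩
    · rintro e1 ⟨-, h1⟩ e2 ⟨-, h2⟩ hh
      have hh' : e1.erase a = e2.erase a := hh
      rw [← Multiset.cons_erase h1, ← Multiset.cons_erase h2, hh']
    · rintro e' ⟨-, hce'⟩
      refine ⟨a ::ₘ e', ⟨?_, Multiset.mem_cons_self a e'⟩, Multiset.erase_cons_head a e'⟩
      simp only [Multiset.card_cons]
      omega
    · rintro f ⟨hf, haf⟩
      refine ⟨fun x _ => Finset.mem_univ x, ?_⟩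
      rw [card_erase_eq a f k haf hf hk]
    · rintro f1 ⟨-, h1⟩ f2 ⟨-, h2⟩ hh
      have hh' : f1.erase a = f2.erase a := hh
      rw [← Multiset.cons_erase h1, ← Multiset.cons_erase h2, hh']
    · rintro f' ⟨-, hcf'⟩
      refine ⟨a ::ₘ f', ⟨?_, Multiset.mem_cons_self a f'⟩, Multiset.erase_cons_head a f'⟩
      simp only [Multiset.card_cons]
      omega
    · rintro e ⟨he, hae⟩ f ⟨hf, haf⟩
      have h1 := card_pos_of_mem a e hae
      constructor
      · rintro ⟨hv, -, -⟩
        obtain ⟨hf', he', hex⟩ := (verinc_univ k f e).1 hv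
        exact (verinc_univ (k-1) (f.erase a) (e.erase a)).2
          ⟨card_erase_eq a f k haf hf hk,
           card_erase_lt a e k hae he hk,
           (exists_erase_equiv k a e f hae haf he' hf').1 hex⟩
      · intro hv
        obtain ⟨-, -, hex⟩ := (verinc_univ (k-1) (f.erase a) (e.erase a)).1 hv
        exact ⟨(verinc_univ k f e).2
          ⟨hf, he, (exists_erase_equiv k a e f hae haf he hf).2 hex⟩, ⟨he, hae⟩, hf, haf⟩
  have iso3 : IncStr.Isomorphic (dualVerPart1 α k a)
      (Ver (Finset.univ.erase a) k).dual := by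
    have hpts : (dualVerPart1 α k a).pts = (Ver (Finset.univ.erase a) k).dual.pts := by
      ext e
      simp only [dualVerPart1, IncStr.dual, Ver, Set.mem_setOf_eq, Finset.mem_erase,
        Finset.mem_univ, and_true]
      constructor
      · rintro ⟨h1, h2⟩
        exact ⟨fun x hx hxa => h2 (hxa ▸ hx), h1⟩
      · rintro ⟨h1, h2⟩
        exact ⟨h2, fun h => h1 a h rfl⟩
    have hlns : (dualVerPart1 α k a).lns = (Ver (Finset.univ.erase a) k).dual.lns := by
      ext f
      simp only [dualVerPart1, IncStr.dual, Ver, Set.mem_setOf_eq, Finset.mem_erase,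
        Finset.mem_univ, and_true]
      constructor
      · rintro ⟨h1, h2⟩
        exact ⟨fun x hx hxa => h2 (hxa ▸ hx), h1⟩
      · rintro ⟨h1, h2⟩
        exact ⟨h2, fun h => h1 a h rfl⟩
    refine ⟨id, id, hpts ▸ Set.bijOn_id _, hlns ▸ Set.bijOn_id _, ?_⟩
    rintro e ⟨he, hae⟩ f ⟨hf, haf⟩
    constructor
    · rintro ⟨hv, -, -⟩
      obtain ⟨hf', he', hex⟩ := (verinc_univ k f e).1 hv
      exact (verinc_erase k a f e).2
        ⟨haf, hf', hae, he', (exists_ne_equiv k a e f he' haf).1 hex⟩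
    · intro hv
      obtain ⟨-, hf', -, he', hex⟩ := (verinc_erase k a f e).1 hv
      exact ⟨(verinc_univ k f e).2
        ⟨hf', he', (exists_ne_equiv k a e f he' haf).2 hex⟩, ⟨he, hae⟩, hf, haf⟩
  refine ⟨heq, iso2, iso3, ?_⟩
  rw [heq]
  refine ⟨fun e => if a ∈ e then (e.erase a, false) else (e, true),
          fun f => if a ∈ f then (f.erase a, false) else (f, true), ⟨?_, ?_, ?_⟩,
          ⟨?_, ?_, ?_⟩, ?_⟩
  · -- MapsTo on points
    rintro e (⟨he, hae⟩ | ⟨he, hae⟩)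
    · dsimp only
      rw [if_pos hae]
      left
      exact ⟨e.erase a, ⟨fun x _ => Finset.mem_univ x,
        card_erase_lt a e k hae he hk⟩, rfl⟩
    · dsimp only
      rw [if_neg hae]
      right
      exact ⟨e, ⟨fun x hx => Finset.mem_erase.2 ⟨fun h => hae (h ▸ hx), Finset.mem_univ x⟩,
        he⟩, rfl⟩
  · -- InjOn on points
    intro e1 h1 e2 h2 hh
    dsimp only at hh
    by_cases h1a : a ∈ e1 <;> by_cases h2a : a ∈ e2
    · rw [if_pos h1a, if_pos h2a] at hh
      have := congrArg Prod.fst hh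
      dsimp only at this
      rw [← Multiset.cons_erase h1a, ← Multiset.cons_erase h2a, this]
    · rw [if_pos h1a, if_neg h2a] at hh
      have := congrArg Prod.snd hh
      simp at this
    · rw [if_neg h1a, if_pos h2a] at hh
      have := congrArg Prod.snd hh
      simp at this
    · rw [if_neg h1a, if_neg h2a] at hh
      exact congrArg Prod.fst hh
  · -- SurjOn on points
    rintro ⟨e', b⟩ (⟨e0, h0, heq0⟩ | ⟨e0, h0, heq0⟩)
    · obtain ⟨-, hce⟩ := h0
      cases heq0
      refine ⟨a ::ₘ e', Or.inl ⟨?_, Multiset.mem_cons_self a e'⟩, ?_⟩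
      · simp only [Multiset.card_cons]
        omega
      · dsimp only
        rw [if_pos (Multiset.mem_cons_self a e'), Multiset.erase_cons_head]
    · obtain ⟨hmem, hce⟩ := h0
      have hae : a ∉ e0 := fun h => (Finset.mem_erase.1 (hmem a h)).1 rfl
      cases heq0
      refine ⟨e', Or.inr ⟨hce, hae⟩, ?_⟩
      dsimp only
      rw [if_neg hae]
  · -- MapsTo on lines
    rintro f (⟨hf, haf⟩ | ⟨hf, haf⟩)
    · dsimp only
      rw [if_pos haf]
      left
      exact ⟨f.erase a, ⟨fun x _ => Finset.mem_univ x,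
        card_erase_eq a f k haf hf hk⟩, rfl⟩
    · dsimp only
      rw [if_neg haf]
      right
      exact ⟨f, ⟨fun x hx => Finset.mem_erase.2 ⟨fun h => haf (h ▸ hx), Finset.mem_univ x⟩,
        hf⟩, rfl⟩
  · -- InjOn on lines
    intro f1 h1 f2 h2 hh
    dsimp only at hh
    by_cases h1a : a ∈ f1 <;> by_cases h2a : a ∈ f2
    · rw [if_pos h1a, if_pos h2a] at hh
      have := congrArg Prod.fst hh
      dsimp only at this
      rw [← Multiset.cons_erase h1a, ← Multiset.cons_erase h2a, this]
    · rw [if_pos h1a, if_neg h2a] at hh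
      have := congrArg Prod.snd hh
      simp at this
    · rw [if_neg h1a, if_pos h2a] at hh
      have := congrArg Prod.snd hh
      simp at this
    · rw [if_neg h1a, if_neg h2a] at hh
      exact congrArg Prod.fst hh
  · -- SurjOn on lines
    rintro ⟨f', b⟩ (⟨f0, h0, heq0⟩ | ⟨f0, h0, heq0⟩)
    · obtain ⟨-, hcf⟩ := h0
      cases heq0
      refine ⟨a ::ₘ f', Or.inl ⟨?_, Multiset.mem_cons_self a f'⟩, ?_⟩
      · simp only [Multiset.card_cons]
        omega
      · dsimp only
        rw [if_pos (Multiset.mem_cons_self a f'), Multiset.erase_cons_head]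
    · obtain ⟨hmem, hcf⟩ := h0
      have haf : a ∉ f0 := fun h => (Finset.mem_erase.1 (hmem a h)).1 rfl
      cases heq0
      refine ⟨f', Or.inr ⟨hcf, haf⟩, ?_⟩
      dsimp only
      rw [if_neg haf]
  · -- incidence
    rintro e (⟨he, hae⟩ | ⟨he, hae⟩) f (⟨hf, haf⟩ | ⟨hf, haf⟩)
    · -- a ∈ e, a ∈ f
      have h1 := card_pos_of_mem a e hae
      dsimp only
      rw [if_pos hae, if_pos haf]
      constructor
      · rintro (⟨hv, -, -⟩ | ⟨-, ⟨-, hne⟩, -⟩ | ⟨-, rfl⟩)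
        · left
          refine ⟨?_, rfl, rfl⟩
          obtain ⟨hf', he', hex⟩ := (verinc_univ k f e).1 hv
          exact (verinc_univ (k-1) (f.erase a) (e.erase a)).2
            ⟨card_erase_eq a f k haf hf hk,
             card_erase_lt a e k hae he hk,
             (exists_erase_equiv k a e f hae haf he' hf').1 hex⟩
        · exact absurd hae hne
        · have hae' : a ∈ Multiset.filter (· ≠ a) f := hae
          exact (Multiset.of_mem_filter hae' rfl).elim
      · rintro (⟨hv, -, -⟩ | ⟨-, h, -⟩ | ⟨-, hpe⟩)
        · left
          obtain ⟨-, -, hex⟩ := (verinc_univ (k-1) (f.erase a) (e.erase a)).1 hv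
          exact ⟨(verinc_univ k f e).2
            ⟨hf, he, (exists_erase_equiv k a e f hae haf he hf).2 hex⟩, ⟨he, hae⟩, hf, haf⟩
        · simp at h
        · simp at hpe
    · -- a ∈ e, a ∉ f
      dsimp only
      rw [if_pos hae, if_neg haf]
      constructor
      · rintro (⟨-, -, -, haf'⟩ | ⟨-, ⟨-, hne⟩, -⟩ | ⟨⟨-, haf'⟩, -⟩)
        · exact absurd haf' haf
        · exact absurd hae hne
        · exact absurd haf' haf
      · rintro (⟨-, -, h⟩ | ⟨-, h, -⟩ | ⟨⟨f0, -, heq0⟩, -⟩)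
        · simp at h
        · simp at h
        · simp at heq0
    · -- a ∉ e, a ∈ f
      dsimp only
      rw [if_neg hae, if_pos haf]
      constructor
      · rintro (⟨-, ⟨-, hae'⟩, -⟩ | ⟨-, -, -, haf'⟩ | ⟨-, rfl⟩)
        · exact absurd hae' hae
        · exact absurd haf haf'
        · right; right
          refine ⟨⟨f.erase a, ⟨fun x _ => Finset.mem_univ x,
            card_erase_eq a f k haf hf hk⟩, rfl⟩, ?_⟩
          dsimp only
          rw [filter_erase_eq a f haf]
      · rintro (⟨-, h, -⟩ | ⟨-, -, h⟩ | ⟨-, hpe⟩)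
        · simp at h
        · simp at h
        · right; right
          refine ⟨⟨hf, haf⟩, ?_⟩
          have h1 := congrArg Prod.fst hpe
          dsimp only at h1
          rw [h1, filter_erase_eq a f haf]
    · -- a ∉ e, a ∉ f
      dsimp only
      rw [if_neg hae, if_neg haf]
      constructor
      · rintro (⟨-, ⟨-, h⟩, -⟩ | ⟨hv, -, -⟩ | ⟨⟨-, h⟩, -⟩)
        · exact absurd h hae
        · right; left
          refine ⟨?_, rfl, rfl⟩
          obtain ⟨hf', he', hex⟩ := (verinc_univ k f e).1 hv
          exact (verinc_erase k a f e).2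
            ⟨haf, hf', hae, he', (exists_ne_equiv k a e f he' haf).1 hex⟩
        · exact absurd h haf
      · rintro (⟨-, h, -⟩ | ⟨hv, -, -⟩ | ⟨⟨f0, -, heq0⟩, -⟩)
        · simp at h
        · right; left
          obtain ⟨-, hf', -, he', hex⟩ := (verinc_erase k a f e).1 hv
          exact ⟨(verinc_univ k f e).2
            ⟨hf', he', (exists_ne_equiv k a e f he' haf).2 hex⟩, ⟨he, hae⟩, hf, haf⟩
        · simp at heq0
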